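/- Let A be a bounded-complete continuous dcpo (a continuous Scott domain) with countable basis K containing ⊥, and let w : K → ℝ satisfy w(⊥) = 0, w(k) > 0 for k ≠ ⊥, and ∑_{k∈K} w(k) = 1. For x ∈ A put K_x = {k ∈ K | k ≪ x} and I_x = {k ∈ K | the pair {k, x} has no upper bound in A}; for S ⊆ K put W(S) = ∑_{k∈S} w(k). Define u(x,y) = 1 − W(K_x ∩ K_y) − W(I_x ∩ I_y) and l(x,y) = W(K_x ∩ I_y) + W(K_y ∩ I_x). Assume the basis K is regular: for every k ∈ K and every maximal element x of A, k ⊑ x implies k ≪ x. Then for all maximal elements x, y of A one has l(x,y) = u(x,y); the function μ(x,y) = l(x,y) = u(x,y) is a metric on the set Total(A) of maximal elements of A; and the metric topology of (Total(A), μ) equals the topology induced on Total(A) by the Scott topology of A. -/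

import Mathlib

/-- `x` is way below `y`: for every nonempty directed set `S` possessing a least
upper bound `b` with `y ≤ b`, there is `s ∈ S` with `x ≤ s`. -/
def wayBelow {α : Type*} [Preorder α] (x y : α) : Prop :=
  ∀ S : Set α, S.Nonempty → DirectedOn (· ≤ ·) S → ∀ b : α, IsLUB S b → y ≤ b → ∃ s ∈ S, x ≤ s

/-- A directed complete partial order: every directed subset (including `∅`,
so there is a least element) has a least upper bound. -/
def IsDcpo (α : Type*) [Preorder α] : Prop :=
  ∀ S : Set α, DirectedOn (· ≤ ·) S → ∃ b, IsLUB S b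

/-- Bounded completeness: every subset with an upper bound has a least upper bound. -/
def BoundedComplete (α : Type*) [Preorder α] : Prop :=
  ∀ S : Set α, (∃ b, ∀ s ∈ S, s ≤ b) → ∃ m, IsLUB S m

/-- Algebraicity: for every element `a`, the set of compact elements below `a` is
(nonempty and) directed with least upper bound `a`. -/
def IsAlgebraicDom (α : Type*) [Preorder α] : Prop :=
  ∀ a : α, ({k : α | wayBelow k k ∧ k ≤ a}).Nonempty ∧
    DirectedOn (· ≤ ·) {k : α | wayBelow k k ∧ k ≤ a} ∧
    IsLUB {k : α | wayBelow k k ∧ k ≤ a} a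

/-- `K` is a basis of a continuous dcpo: for every `a`, the set of elements of `K`
way below `a` is (nonempty and) directed with least upper bound `a`. -/
def IsDomBasis {α : Type*} [Preorder α] (K : Set α) : Prop :=
  ∀ a : α, ({k ∈ K | wayBelow k a}).Nonempty ∧
    DirectedOn (· ≤ ·) {k ∈ K | wayBelow k a} ∧
    IsLUB {k ∈ K | wayBelow k a} a

/-- Scott open sets: upper sets inaccessible by least upper bounds of nonempty
directed sets. -/
def ScottOpen {α : Type*} [Preorder α] (U : Set α) : Prop :=
  (∀ x ∈ U, ∀ y, x ≤ y → y ∈ U) ∧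
  ∀ S : Set α, S.Nonempty → DirectedOn (· ≤ ·) S → ∀ b : α, IsLUB S b → b ∈ U → ∃ s ∈ S, s ∈ U

/-- Interior in the Scott topology: the largest Scott open subset. -/
def scottInt {α : Type*} [Preorder α] (B : Set α) : Set α :=
  ⋃₀ {U : Set α | ScottOpen U ∧ U ⊆ B}

/-- Negative information about `x`: the elements inconsistent with `x`
(the pair has no upper bound). -/
def negSet {α : Type*} [Preorder α] (x : α) : Set α :=
  {y | ¬∃ b, x ≤ b ∧ y ≤ b}

/-- `J_x = {y | x ∈ Int (I_y)}`, the continuous approximation of `I_x = negSet x`. -/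
def jSet {α : Type*} [Preorder α] (x : α) : Set α :=
  {y | x ∈ scottInt (negSet y)}

/-- The set of total (maximal) elements. -/
def TotalElems (α : Type*) [Preorder α] : Set α := {x | ∀ y, x ≤ y → y = x}

/-- The weight of a set of elements: the sum of the weights of its members. -/
noncomputable def Wt {α : Type*} (w : α → ℝ) (S : Set α) : ℝ :=
  ∑' k : S, w (k : α)

/-- The basic elements way below `x`. -/
def basisBelow {α : Type*} [Preorder α] (K : Set α) (x : α) : Set α :=
  {k ∈ K | wayBelow k x}

/-- The basic elements inconsistent with `x` (no common upper bound). -/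
def basisIncons {α : Type*} [Preorder α] (K : Set α) (x : α) : Set α :=
  {k ∈ K | ¬∃ b, k ≤ b ∧ x ≤ b}

section Aux
variable {α : Type*} [PartialOrder α]

lemma wb_le {x y : α} (h : wayBelow x y) : x ≤ y := by
  obtain ⟨s, hs, hxs⟩ := h {y} ⟨y, rfl⟩ (directedOn_singleton y) y
    isLUB_singleton le_rfl
  rwa [Set.mem_singleton_iff.mp hs] at hxs

lemma wb_mono_left {x' x y : α} (h1 : x' ≤ x) (h : wayBelow x y) : wayBelow x' y := by
  intro S hS hdir b hb hyb
  obtain ⟨s, hs, hxs⟩ := h S hS hdir b hb hyb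
  exact ⟨s, hs, h1.trans hxs⟩

lemma wb_mono_right {x y y' : α} (h : wayBelow x y) (h2 : y ≤ y') : wayBelow x y' := by
  intro S hS hdir b hb hyb
  exact h S hS hdir b hb (h2.trans hyb)

lemma bot_wayBelow {bot : α} (hbot : ∀ a : α, bot ≤ a) (y : α) : wayBelow bot y := by
  intro S hS _ b _ _
  obtain ⟨s, hs⟩ := hS
  exact ⟨s, hs, hbot s⟩

lemma interpolation {K : Set α} (hK : IsDomBasis K) {k b : α} (h : wayBelow k b) :
    ∃ m ∈ K, wayBelow k m ∧ wayBelow m b := by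
  set D := {m | m ∈ K ∧ ∃ m' ∈ K, wayBelow m m' ∧ wayBelow m' b} with hD
  have hne : D.Nonempty := by
    obtain ⟨m', hm'K, hm'b⟩ := (hK b).1
    obtain ⟨m, hmK, hmm'⟩ := (hK m').1
    exact ⟨m, hmK, m', hm'K, hmm', hm'b⟩
  have hdir : DirectedOn (· ≤ ·) D := by
    rintro m₁ ⟨hm₁K, m₁', hm₁'K, h₁, h₁b⟩ m₂ ⟨hm₂K, m₂', hm₂'K, h₂, h₂b⟩
    obtain ⟨m₃', ⟨hm₃'K, hm₃'b⟩, hle₁, hle₂⟩ := (hK b).2.1 m₁' ⟨hm₁'K, h₁b⟩ m₂' ⟨hm₂'K, h₂b⟩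
    have h₁3 : wayBelow m₁ m₃' := wb_mono_right h₁ hle₁
    have h₂3 : wayBelow m₂ m₃' := wb_mono_right h₂ hle₂
    obtain ⟨m, ⟨hmK, hm3⟩, hle₁', hle₂'⟩ := (hK m₃').2.1 m₁ ⟨hm₁K, h₁3⟩ m₂ ⟨hm₂K, h₂3⟩
    exact ⟨m, ⟨hmK, m₃', hm₃'K, hm3, hm₃'b⟩, hle₁', hle₂'⟩
  have hlub : IsLUB D b := by
    constructor
    · rintro m ⟨_, m', _, hmm', hm'b⟩
      exact (wb_le hmm').trans (wb_le hm'b)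
    · intro c hc
      refine (hK b).2.2.2 ?_
      rintro m' ⟨hm'K, hm'b⟩
      refine (hK m').2.2.2 ?_
      rintro m ⟨hmK, hmm'⟩
      exact hc ⟨hmK, m', hm'K, hmm', hm'b⟩
  obtain ⟨m, ⟨hmK, m', hm'K, hmm', hm'b⟩, hkm⟩ := h D hne hdir b hlub le_rfl
  exact ⟨m', hm'K, wb_mono_left hkm hmm', hm'b⟩

lemma scottOpen_univ : ScottOpen (Set.univ : Set α) :=
  ⟨fun _ _ _ _ => trivial, fun _ hS _ _ _ _ => ⟨hS.choose, hS.choose_spec, trivial⟩⟩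

lemma scottOpen_inter {U V : Set α} (hU : ScottOpen U) (hV : ScottOpen V) :
    ScottOpen (U ∩ V) := by
  constructor
  · rintro x ⟨hxU, hxV⟩ y hxy
    exact ⟨hU.1 x hxU y hxy, hV.1 x hxV y hxy⟩
  · rintro S hS hdir b hb ⟨hbU, hbV⟩
    obtain ⟨s₁, hs₁S, hs₁U⟩ := hU.2 S hS hdir b hb hbU
    obtain ⟨s₂, hs₂S, hs₂V⟩ := hV.2 S hS hdir b hb hbV
    obtain ⟨s₃, hs₃S, h₁, h₂⟩ := hdir s₁ hs₁S s₂ hs₂S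
    exact ⟨s₃, hs₃S, hU.1 s₁ hs₁U s₃ h₁, hV.1 s₂ hs₂V s₃ h₂⟩

lemma scottOpen_sUnion {C : Set (Set α)} (h : ∀ W ∈ C, ScottOpen W) :
    ScottOpen (⋃₀ C) := by
  constructor
  · rintro x ⟨W, hW, hxW⟩ y hxy
    exact ⟨W, hW, (h W hW).1 x hxW y hxy⟩
  · rintro S hS hdir b hb ⟨W, hW, hbW⟩
    obtain ⟨s, hsS, hsW⟩ := (h W hW).2 S hS hdir b hb hbW
    exact ⟨s, hsS, W, hW, hsW⟩

lemma scottOpen_biInter_finset {β : Type*} (F : Finset β) (O : β → Set α)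
    (h : ∀ b ∈ F, ScottOpen (O b)) : ScottOpen (⋂ b ∈ F, O b) := by
  classical
  induction F using Finset.induction_on with
  | empty => simpa using scottOpen_univ
  | @insert a s hnotmem ih =>
      rw [Finset.set_biInter_insert]
      exact scottOpen_inter (h a (Finset.mem_insert_self a s))
        (ih fun b hb => h b (Finset.mem_insert_of_mem hb))

lemma scottOpen_wayBelowSet {K : Set α} (hK : IsDomBasis K) (k : α) :
    ScottOpen {y | wayBelow k y} := by
  constructor
  · exact fun x hx y hxy => wb_mono_right hx hxy
  · intro S hS hdir b hb hkb
    obtain ⟨m, _, hkm, hmb⟩ := interpolation hK hkb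
    obtain ⟨s, hsS, hms⟩ := hmb S hS hdir b hb le_rfl
    exact ⟨s, hsS, wb_mono_right hkm hms⟩

lemma scottOpen_negSet (hd : IsDcpo α) (hb : BoundedComplete α) (k : α) :
    ScottOpen (negSet k) := by
  constructor
  · rintro x hx y hxy ⟨c, hkc, hyc⟩
    exact hx ⟨c, hkc, hxy.trans hyc⟩
  · intro S hS hdir b0 hb0 hmem
    by_contra hcon
    push_neg at hcon
    have hcons : ∀ s ∈ S, ∃ c, IsLUB {k, s} c := by
      intro s hsS
      obtain ⟨c, hkc, hsc⟩ := not_not.mp (hcon s hsS)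
      exact hb {k, s} ⟨c, by rintro t (rfl | rfl) <;> assumption⟩
    set T := {c | ∃ s ∈ S, IsLUB {k, s} c} with hT
    have hTne : T.Nonempty := by
      obtain ⟨s, hsS⟩ := hS
      obtain ⟨c, hc⟩ := hcons s hsS
      exact ⟨c, s, hsS, hc⟩
    have hTdir : DirectedOn (· ≤ ·) T := by
      rintro c₁ ⟨s₁, hs₁, hc₁⟩ c₂ ⟨s₂, hs₂, hc₂⟩
      obtain ⟨s₃, hs₃, h₁, h₂⟩ := hdir s₁ hs₁ s₂ hs₂
      obtain ⟨c₃, hc₃⟩ := hcons s₃ hs₃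
      have hk3 : k ≤ c₃ := hc₃.1 (by left; rfl)
      have hs3 : s₃ ≤ c₃ := hc₃.1 (by right; rfl)
      refine ⟨c₃, ⟨s₃, hs₃, hc₃⟩, ?_, ?_⟩
      · exact hc₁.2 (by rintro t (rfl | rfl); exact hk3; exact h₁.trans hs3)
      · exact hc₂.2 (by rintro t (rfl | rfl); exact hk3; exact h₂.trans hs3)
    obtain ⟨b, hbT⟩ := hd T hTdir
    have hkb : k ≤ b := by
      obtain ⟨c, s, hsS, hc⟩ := hTne
      exact (hc.1 (by left; rfl)).trans (hbT.1 ⟨s, hsS, hc⟩)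
    have hb0b : b0 ≤ b := by
      refine hb0.2 fun s hsS => ?_
      obtain ⟨c, hc⟩ := hcons s hsS
      exact (hc.1 (by right; rfl)).trans (hbT.1 ⟨s, hsS, hc⟩)
    exact hmem ⟨b, hkb, hb0b⟩

end Aux

section Wg
variable {α : Type*} {g : α → ℝ}

lemma Wg_nonneg (hg0 : ∀ a, 0 ≤ g a) (A : Set α) : 0 ≤ ∑' a, A.indicator g a :=
  tsum_nonneg fun a => Set.indicator_nonneg (fun b _ => hg0 b) a

lemma Wg_mono (hg : Summable g) (hg0 : ∀ a, 0 ≤ g a) {A B : Set α} (h : A ⊆ B) :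
    ∑' a, A.indicator g a ≤ ∑' a, B.indicator g a :=
  Summable.tsum_le_tsum (fun a => Set.indicator_le_indicator_of_subset h (fun b => hg0 b) a)
    (hg.indicator A) (hg.indicator B)

lemma Wg_union_le (hg : Summable g) (hg0 : ∀ a, 0 ≤ g a) (A B : Set α) :
    ∑' a, (A ∪ B).indicator g a ≤ (∑' a, A.indicator g a) + ∑' a, B.indicator g a := by
  have h1 : ∀ a, (A ∪ B).indicator g a ≤ A.indicator g a + B.indicator g a := by
    intro a
    by_cases hA : a ∈ A
    · rw [Set.indicator_of_mem (Set.mem_union_left B hA), Set.indicator_of_mem hA]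
      have := Set.indicator_nonneg (fun b (_ : b ∈ B) => hg0 b) a
      linarith
    · by_cases hB : a ∈ B
      · rw [Set.indicator_of_mem (Set.mem_union_right A hB), Set.indicator_of_mem hB,
          Set.indicator_of_notMem hA]
        linarith
      · rw [Set.indicator_of_notMem hA, Set.indicator_of_notMem hB,
          Set.indicator_of_notMem (fun h => h.elim hA hB)]
        linarith
  calc ∑' a, (A ∪ B).indicator g a
      ≤ ∑' a, (A.indicator g a + B.indicator g a) :=
        Summable.tsum_le_tsum h1 (hg.indicator _) ((hg.indicator A).add (hg.indicator B))
    _ = (∑' a, A.indicator g a) + ∑' a, B.indicator g a :=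
        Summable.tsum_add (hg.indicator A) (hg.indicator B)

lemma Wg_union_disjoint (hg : Summable g) {A B : Set α} (hAB : Disjoint A B) :
    ∑' a, (A ∪ B).indicator g a = (∑' a, A.indicator g a) + ∑' a, B.indicator g a := by
  rw [Set.indicator_union_of_disjoint hAB]
  exact Summable.tsum_add (hg.indicator A) (hg.indicator B)

lemma Wg_single (hg : Summable g) (hg0 : ∀ a, 0 ≤ g a) {A : Set α} {k : α} (hk : k ∈ A) :
    g k ≤ ∑' a, A.indicator g a := by
  have := Summable.le_tsum (hg.indicator A) k
    (fun j _ => Set.indicator_nonneg (fun b _ => hg0 b) j)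
  rwa [Set.indicator_of_mem hk] at this

lemma Wg_empty : ∑' a, (∅ : Set α).indicator g a = 0 := by simp

end Wg

/-- with `u(x,y) = 1 − W(K_x ∩ K_y) − W(I_x ∩ I_y)` and
`l(x,y) = W(K_x ∩ I_y) + W(K_y ∩ I_x)` on a bounded complete continuous dcpo with
a regular countable basis, `l = u` on maximal elements, `μ = l = u` is a metric on
`Total(A)`, and its metric topology is the topology induced by the Scott topology. -/
theorem stmt12 {α : Type*} [PartialOrder α]
    (hd : IsDcpo α) (hb : BoundedComplete α)
    (K : Set α) (hKc : K.Countable) (hK : IsDomBasis K)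
    (bot : α) (hbot : ∀ a : α, bot ≤ a) (hbotK : bot ∈ K)
    (w : α → ℝ) (hw0 : w bot = 0) (hwpos : ∀ k ∈ K, k ≠ bot → 0 < w k)
    (hsum : Summable fun k : K => w (k : α))
    (hsum1 : ∑' k : K, w (k : α) = 1)
    (hreg : ∀ k ∈ K, ∀ x ∈ TotalElems α, k ≤ x → wayBelow k x)
    (u l : α → α → ℝ)
    (hu : ∀ x y : α, u x y =
      1 - Wt w (basisBelow K x ∩ basisBelow K y) - Wt w (basisIncons K x ∩ basisIncons K y))
    (hl : ∀ x y : α, l x y =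
      Wt w (basisBelow K x ∩ basisIncons K y) + Wt w (basisBelow K y ∩ basisIncons K x)) :
    -- l = u on total elements
    (∀ x ∈ TotalElems α, ∀ y ∈ TotalElems α, l x y = u x y) ∧
    -- μ = l = u is a metric on Total(A)
    (∀ x ∈ TotalElems α, ∀ y ∈ TotalElems α, 0 ≤ u x y) ∧
    (∀ x ∈ TotalElems α, ∀ y ∈ TotalElems α, (u x y = 0 ↔ x = y)) ∧
    (∀ x ∈ TotalElems α, ∀ y ∈ TotalElems α, u x y = u y x) ∧
    (∀ x ∈ TotalElems α, ∀ y ∈ TotalElems α, ∀ z ∈ TotalElems α,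
      u x z ≤ u x y + u y z) ∧
    -- the metric topology on Total(A) is the subspace topology induced by
    -- the Scott topology
    (∀ T : Set α, T ⊆ TotalElems α →
      ((∃ U : Set α, ScottOpen U ∧ T = U ∩ TotalElems α) ↔
        (∀ x ∈ T, ∃ ε : ℝ, 0 < ε ∧ {y ∈ TotalElems α | u x y < ε} ⊆ T))) := by
  classical
  -- the weight function as an indicator on the whole type
  set g : α → ℝ := K.indicator w with hg_def
  have hgsum : Summable g := by
    rw [hg_def, ← summable_subtype_iff_indicator]
    exact hsum
  have hg0 : ∀ a, 0 ≤ g a := by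
    intro a
    refine Set.indicator_nonneg (fun b hb => ?_) a
    by_cases hbb : b = bot
    · simp [hbb, hw0]
    · exact (hwpos b hb hbb).le
  set W : Set α → ℝ := fun S => ∑' a, S.indicator g a with hW_def
  have hWeq : ∀ S : Set α, S ⊆ K → Wt w S = W S := by
    intro S hS
    rw [Wt, tsum_subtype S w, hW_def]
    refine tsum_congr fun a => ?_
    by_cases ha : a ∈ S
    · rw [Set.indicator_of_mem ha, Set.indicator_of_mem ha, hg_def,
        Set.indicator_of_mem (hS ha)]
    · rw [Set.indicator_of_notMem ha, Set.indicator_of_notMem ha]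
  have hW1 : W K = 1 := by
    have h1 : Wt w K = 1 := hsum1
    rwa [hWeq K subset_rfl] at h1
  -- basic facts on total elements
  have hcons_le : ∀ x ∈ TotalElems α, ∀ k : α, (∃ b, k ≤ b ∧ x ≤ b) → k ≤ x := by
    rintro x hx k ⟨b, hkb, hxb⟩
    rwa [hx b hxb] at hkb
  have hKxsub : ∀ x : α, basisBelow K x ⊆ K := fun x k hk => hk.1
  have hIxsub : ∀ x : α, basisIncons K x ⊆ K := fun x k hk => hk.1
  have hcover : ∀ x ∈ TotalElems α, basisBelow K x ∪ basisIncons K x = K := by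
    intro x hx
    apply Set.Subset.antisymm
    · rintro k (hk | hk) <;> exact hk.1
    · intro k hkK
      by_cases h : ∃ b, k ≤ b ∧ x ≤ b
      · exact Or.inl ⟨hkK, hreg k hkK x hx (hcons_le x hx k h)⟩
      · exact Or.inr ⟨hkK, h⟩
  have hdisj : ∀ x : α, Disjoint (basisBelow K x) (basisIncons K x) := by
    intro x
    rw [Set.disjoint_left]
    rintro k ⟨_, hkx⟩ ⟨_, hnc⟩
    exact hnc ⟨x, wb_le hkx, le_rfl⟩
  have hsplit : ∀ y ∈ TotalElems α, ∀ S : Set α, S ⊆ K →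
      W S = W (S ∩ basisBelow K y) + W (S ∩ basisIncons K y) := by
    intro y hy S hS
    have hSeq : S = (S ∩ basisBelow K y) ∪ (S ∩ basisIncons K y) := by
      rw [← Set.inter_union_distrib_left, hcover y hy]
      exact (Set.inter_eq_left.mpr hS).symm
    have hdisj' : Disjoint (S ∩ basisBelow K y) (S ∩ basisIncons K y) :=
      ((hdisj y).mono Set.inter_subset_right Set.inter_subset_right)
    calc W S = W ((S ∩ basisBelow K y) ∪ (S ∩ basisIncons K y)) := by rw [← hSeq]
      _ = _ := Wg_union_disjoint hgsum hdisj'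
  -- l and u in terms of W
  have hWl : ∀ x y : α, l x y = W (basisBelow K x ∩ basisIncons K y) +
      W (basisBelow K y ∩ basisIncons K x) := by
    intro x y
    rw [hl, hWeq _ (Set.inter_subset_left.trans (hKxsub x)),
      hWeq _ (Set.inter_subset_left.trans (hKxsub y))]
  have hWu : ∀ x y : α, u x y = 1 - W (basisBelow K x ∩ basisBelow K y) -
      W (basisIncons K x ∩ basisIncons K y) := by
    intro x y
    rw [hu, hWeq _ (Set.inter_subset_left.trans (hKxsub x)),
      hWeq _ (Set.inter_subset_left.trans (hIxsub x))]
  -- the four-way partition identity for total x, y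
  have hfour : ∀ x ∈ TotalElems α, ∀ y ∈ TotalElems α,
      W (basisBelow K x ∩ basisBelow K y) + W (basisBelow K x ∩ basisIncons K y) +
      (W (basisIncons K x ∩ basisBelow K y) + W (basisIncons K x ∩ basisIncons K y)) = 1 := by
    intro x hx y hy
    have h1 : W K = W (basisBelow K x) + W (basisIncons K x) := by
      have := hsplit x hx K subset_rfl
      rwa [Set.inter_eq_right.mpr (hKxsub x), Set.inter_eq_right.mpr (hIxsub x)] at this
    rw [← hsplit y hy (basisBelow K x) (hKxsub x), ← hsplit y hy (basisIncons K x) (hIxsub x),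
      ← h1, hW1]
  -- Part 1 : l = u on total elements
  have hlu : ∀ x ∈ TotalElems α, ∀ y ∈ TotalElems α, l x y = u x y := by
    intro x hx y hy
    have h4 := hfour x hx y hy
    have hc : basisBelow K y ∩ basisIncons K x = basisIncons K x ∩ basisBelow K y :=
      Set.inter_comm _ _
    rw [hWl, hWu, hc]
    linarith
  have hlnonneg : ∀ x y : α, 0 ≤ l x y := by
    intro x y
    rw [hWl]
    have := Wg_nonneg hg0 (basisBelow K x ∩ basisIncons K y)
    have := Wg_nonneg hg0 (basisBelow K y ∩ basisIncons K x)
    linarith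
  refine ⟨hlu, ?_, ?_, ?_, ?_, ?_⟩
  -- Part 2 : nonnegativity
  · intro x hx y hy
    rw [← hlu x hx y hy]
    exact hlnonneg x y
  -- Part 3 : u x y = 0 ↔ x = y
  · intro x hx y hy
    constructor
    · intro h0
      rw [← hlu x hx y hy, hWl] at h0
      have hn1 := Wg_nonneg hg0 (basisBelow K x ∩ basisIncons K y)
      have hn2 := Wg_nonneg hg0 (basisBelow K y ∩ basisIncons K x)
      have hz1 : W (basisBelow K x ∩ basisIncons K y) = 0 := by linarith
      have hempty : ∀ k ∈ basisBelow K x, k ∉ basisIncons K y := by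
        intro k hk hkI
        have hkbot : k = bot := by
          by_contra hkb
          have h1 : w k ≤ W (basisBelow K x ∩ basisIncons K y) := by
            have h2 : g k ≤ W (basisBelow K x ∩ basisIncons K y) :=
              Wg_single hgsum hg0 ⟨hk, hkI⟩
            rwa [hg_def, Set.indicator_of_mem hk.1] at h2
          have h3 := hwpos k hk.1 hkb
          linarith
        exact hkI.2 ⟨y, hkbot ▸ hbot y, le_rfl⟩
      have hub : y ∈ upperBounds {k ∈ K | wayBelow k x} := by
        intro k hk
        have hknI := hempty k hk
        have hcons : ∃ b, k ≤ b ∧ y ≤ b := by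
          by_contra hnc
          exact hknI ⟨hk.1, hnc⟩
        exact hcons_le y hy k hcons
      have hxy : x ≤ y := (hK x).2.2.2 hub
      exact (hx y hxy).symm ▸ (hx y hxy)
    · intro h
      subst h
      rw [← hlu x hx x hx, hWl]
      have he : basisBelow K x ∩ basisIncons K x = ∅ :=
        Set.disjoint_iff_inter_eq_empty.mp (hdisj x)
      rw [he]
      have h0 : W (∅ : Set α) = 0 := by simp [hW_def]
      rw [h0]; ring
  -- Part 4 : symmetry
  · intro x hx y hy
    rw [hWu, hWu, Set.inter_comm (basisBelow K y), Set.inter_comm (basisIncons K y)]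
  -- Part 5 : triangle inequality
  · intro x hx y hy z hz
    rw [← hlu x hx y hy, ← hlu y hy z hz, ← hlu x hx z hz, hWl, hWl, hWl]
    have hsub1 : basisBelow K x ∩ basisIncons K z ⊆
        (basisBelow K y ∩ basisIncons K z) ∪ (basisBelow K x ∩ basisIncons K y) := by
      rintro k ⟨hkx, hkz⟩
      have hkK : k ∈ K := hkx.1
      have := hcover y hy
      have hky : k ∈ basisBelow K y ∪ basisIncons K y := by rw [this]; exact hkK
      rcases hky with hky | hky
      · exact Or.inl ⟨hky, hkz⟩
      · exact Or.inr ⟨hkx, hky⟩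
    have hsub2 : basisBelow K z ∩ basisIncons K x ⊆
        (basisBelow K y ∩ basisIncons K x) ∪ (basisBelow K z ∩ basisIncons K y) := by
      rintro k ⟨hkz, hkx⟩
      have hkK : k ∈ K := hkz.1
      have := hcover y hy
      have hky : k ∈ basisBelow K y ∪ basisIncons K y := by rw [this]; exact hkK
      rcases hky with hky | hky
      · exact Or.inl ⟨hky, hkx⟩
      · exact Or.inr ⟨hkz, hky⟩
    have h1 := (Wg_mono hgsum hg0 hsub1).trans (Wg_union_le hgsum hg0 _ _)
    have h2 := (Wg_mono hgsum hg0 hsub2).trans (Wg_union_le hgsum hg0 _ _)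
    have e1 : W (basisBelow K x ∩ basisIncons K z) ≤
        W (basisBelow K y ∩ basisIncons K z) + W (basisBelow K x ∩ basisIncons K y) := h1
    have e2 : W (basisBelow K z ∩ basisIncons K x) ≤
        W (basisBelow K y ∩ basisIncons K x) + W (basisBelow K z ∩ basisIncons K y) := h2
    linarith
  -- Part 6 : topologies coincide
  · intro T hTsub
    constructor
    · -- Scott open trace → metrically open
      rintro ⟨U, hU, rfl⟩ x hx
      obtain ⟨hxU, hxT⟩ := hx
      obtain ⟨k, ⟨hkK, hkx⟩, hkU⟩ := hU.2 {k ∈ K | wayBelow k x} (hK x).1 (hK x).2.1 x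
        (hK x).2.2 hxU
      by_cases hkb : k = bot
      · refine ⟨1, one_pos, ?_⟩
        rintro y ⟨hyT, _⟩
        exact ⟨hU.1 k hkU y (hkb ▸ hbot y), hyT⟩
      · refine ⟨w k, hwpos k hkK hkb, ?_⟩
        rintro y ⟨hyT, hyd⟩
        have hluxy : l x y < w k := by rwa [hlu x hxT y hyT]
        have hknIy : k ∉ basisIncons K y := by
          intro hkIy
          have h1 : w k ≤ W (basisBelow K x ∩ basisIncons K y) := by
            have h2 : g k ≤ W (basisBelow K x ∩ basisIncons K y) :=
              Wg_single hgsum hg0 ⟨⟨hkK, hkx⟩, hkIy⟩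
            rwa [hg_def, Set.indicator_of_mem hkK] at h2
          have h3 := Wg_nonneg hg0 (basisBelow K y ∩ basisIncons K x)
          rw [hWl] at hluxy
          linarith
        have hcons : ∃ b, k ≤ b ∧ y ≤ b := by
          by_contra hnc
          exact hknIy ⟨hkK, hnc⟩
        have hky : k ≤ y := hcons_le y hyT k hcons
        exact ⟨hU.1 k hkU y hky, hyT⟩
    · -- metrically open → Scott open trace
      intro hT
      have key : ∀ x ∈ T, ∃ V : Set α, ScottOpen V ∧ x ∈ V ∧
          ∀ y ∈ V, y ∈ TotalElems α → y ∈ T := by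
        intro x hxT
        have hxTot : x ∈ TotalElems α := hTsub hxT
        obtain ⟨ε, hε, hball⟩ := hT x hxT
        -- find a finite set F with small tail
        obtain ⟨F, hF⟩ := ((tendsto_tsum_compl_atTop_zero g).eventually
          (gt_mem_nhds (half_pos hε))).exists
        have htail : W {a | a ∉ F} < ε / 2 := by
          have he : W {a | a ∉ F} = ∑' (a : {b // b ∉ F}), g ↑a :=
            (tsum_subtype {a | a ∉ F} g).symm
          rwa [he]
        set O : α → Set α := fun k =>
          if k ∈ K ∧ wayBelow k x then {y | wayBelow k y}
          else if k ∈ K ∧ ¬∃ b, k ≤ b ∧ x ≤ b then negSet k else Set.univ with hO_def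
        have hOk : ∀ k : α, O k = if k ∈ K ∧ wayBelow k x then {y | wayBelow k y}
          else if k ∈ K ∧ ¬∃ b, k ≤ b ∧ x ≤ b then negSet k else Set.univ := fun k => rfl
        have hOopen : ∀ k, ScottOpen (O k) := by
          intro k
          rw [hOk k]
          split_ifs with h1 h2
          · exact scottOpen_wayBelowSet hK k
          · exact scottOpen_negSet hd hb k
          · exact scottOpen_univ
        have hxO : ∀ k, x ∈ O k := by
          intro k
          rw [hOk k]
          split_ifs with h1 h2
          · exact h1.2
          · exact h2.2
          · trivial
        refine ⟨⋂ k ∈ F, O k, scottOpen_biInter_finset F O (fun k _ => hOopen k), ?_, ?_⟩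
        · exact Set.mem_iInter₂.mpr fun k _ => hxO k
        · intro y hyV hyTot
          have hyO : ∀ k ∈ F, y ∈ O k := Set.mem_iInter₂.mp hyV
          have hsub1 : basisBelow K x ∩ basisIncons K y ⊆ {a | a ∉ F} := by
            rintro k ⟨⟨hkK, hkx⟩, hkIy⟩ hkF
            have := hyO k hkF
            rw [hOk k, if_pos ⟨hkK, hkx⟩] at this
            exact hkIy.2 ⟨y, wb_le this, le_rfl⟩
          have hsub2 : basisBelow K y ∩ basisIncons K x ⊆ {a | a ∉ F} := by
            rintro k ⟨⟨hkK, hky⟩, hkIx⟩ hkF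
            have hmem := hyO k hkF
            have hnot1 : ¬(k ∈ K ∧ wayBelow k x) := by
              rintro ⟨_, hwb⟩
              exact hkIx.2 ⟨x, wb_le hwb, le_rfl⟩
            rw [hOk k, if_neg hnot1, if_pos ⟨hkK, hkIx.2⟩] at hmem
            exact hmem ⟨y, wb_le hky, le_rfl⟩
          have hb1 : W (basisBelow K x ∩ basisIncons K y) ≤ W {a | a ∉ F} :=
            Wg_mono hgsum hg0 hsub1
          have hb2 : W (basisBelow K y ∩ basisIncons K x) ≤ W {a | a ∉ F} :=
            Wg_mono hgsum hg0 hsub2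
          have hluv : u x y < ε := by
            rw [← hlu x hxTot y hyTot, hWl]
            linarith
          exact hball ⟨hyTot, hluv⟩
      choose V hVopen hxV hVT using key
      refine ⟨⋃₀ {S | ∃ x, ∃ h : x ∈ T, S = V x h}, ?_, ?_⟩
      · apply scottOpen_sUnion
        rintro S ⟨x, hx, rfl⟩
        exact hVopen x hx
      · apply Set.Subset.antisymm
        · intro x hxT
          exact ⟨⟨V x hxT, ⟨x, hxT, rfl⟩, hxV x hxT⟩, hTsub hxT⟩
        · rintro y ⟨⟨S, ⟨x, hx, rfl⟩, hyS⟩, hyTot⟩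
          exact hVT x hx y hyS hyTot
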